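/- Let T : Ω → Ω be an ergodic measure-preserving transformation of a probability space and X : Ω → ℝ measurable with distribution function F. Define I_d(ω) = #{r ∈ {1,…,d−1} : X(T^r(ω)) ≤ X(ω)}. Then for μ-almost every ω, the limit lim_{d→∞} I_d(ω)/d exists and equals F(X(ω)). -/

import Mathlib

open MeasureTheory Set Filter

section LimsupHelpers

private lemma bdd_above_of_abs {u : ℕ → ℝ} {C : ℝ} (hu : ∀ n, |u n| ≤ C) :
    IsBoundedUnder (· ≤ ·) atTop u :=
  isBoundedUnder_of ⟨C, fun n => (abs_le.mp (hu n)).2⟩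

private lemma bdd_below_of_abs {u : ℕ → ℝ} {C : ℝ} (hu : ∀ n, |u n| ≤ C) :
    IsBoundedUnder (· ≥ ·) atTop u :=
  isBoundedUnder_of ⟨-C, fun n => (abs_le.mp (hu n)).1⟩

private lemma limsup_le_limsup_of_tendsto_sub {u v : ℕ → ℝ} {C : ℝ}
    (hu : ∀ n, |u n| ≤ C) (hv : ∀ n, |v n| ≤ C)
    (h : Tendsto (fun n => v n - u n) atTop (nhds 0)) :
    limsup v atTop ≤ limsup u atTop := by
  refine le_of_forall_pos_le_add fun ε hε => ?_
  have hev : ∀ᶠ n in atTop, v n ≤ u n + ε := by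
    filter_upwards [h.eventually_lt_const hε] with n hn
    linarith
  calc limsup v atTop ≤ limsup (fun n => u n + ε) atTop :=
        limsup_le_limsup hev (bdd_below_of_abs hv).isCoboundedUnder_le
          (isBoundedUnder_of ⟨C + ε, fun n => by have := (abs_le.mp (hu n)).2; linarith⟩)
    _ = limsup u atTop + ε :=
        limsup_add_const atTop u ε (bdd_above_of_abs hu)
          (bdd_below_of_abs hu).isCoboundedUnder_le

private lemma limsup_eq_of_tendsto_sub {u v : ℕ → ℝ} {C : ℝ}
    (hu : ∀ n, |u n| ≤ C) (hv : ∀ n, |v n| ≤ C)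
    (h : Tendsto (fun n => v n - u n) atTop (nhds 0)) :
    limsup v atTop = limsup u atTop :=
  le_antisymm (limsup_le_limsup_of_tendsto_sub hu hv h)
    (limsup_le_limsup_of_tendsto_sub hv hu (by simpa [neg_sub] using h.neg))

private lemma liminf_le_liminf_of_tendsto_sub {u v : ℕ → ℝ} {C : ℝ}
    (hu : ∀ n, |u n| ≤ C) (hv : ∀ n, |v n| ≤ C)
    (h : Tendsto (fun n => v n - u n) atTop (nhds 0)) :
    liminf u atTop ≤ liminf v atTop := by
  refine le_of_forall_pos_le_add fun ε hε => ?_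
  have hev : ∀ᶠ n in atTop, u n ≤ v n + ε := by
    filter_upwards [h.eventually_const_lt (neg_neg_iff_pos.mpr hε)] with n hn
    linarith
  calc liminf u atTop ≤ liminf (fun n => v n + ε) atTop :=
        liminf_le_liminf hev (bdd_below_of_abs hu)
          (IsBoundedUnder.isCoboundedUnder_ge (isBoundedUnder_of
            ⟨C + ε, fun n => by have := (abs_le.mp (hv n)).2; linarith⟩))
    _ = liminf v atTop + ε :=
        liminf_add_const atTop v ε (bdd_above_of_abs hv).isCoboundedUnder_ge
          (bdd_below_of_abs hv)

private lemma liminf_eq_of_tendsto_sub {u v : ℕ → ℝ} {C : ℝ}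
    (hu : ∀ n, |u n| ≤ C) (hv : ∀ n, |v n| ≤ C)
    (h : Tendsto (fun n => v n - u n) atTop (nhds 0)) :
    liminf v atTop = liminf u atTop :=
  le_antisymm
    (liminf_le_liminf_of_tendsto_sub hv hu (by simpa [neg_sub] using h.neg))
    (liminf_le_liminf_of_tendsto_sub hu hv h)

end LimsupHelpers

section Birkhoff

variable {Ω : Type*} [MeasurableSpace Ω]

private lemma measurable_birkhoffSum {T : Ω → Ω} (hT : Measurable T) {f : Ω → ℝ}
    (hf : Measurable f) (n : ℕ) : Measurable fun ω => birkhoffSum T f n ω := by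
  unfold birkhoffSum
  exact Finset.measurable_sum _ fun k _ => hf.comp (hT.iterate k)

private lemma abs_birkhoffSum_le {T : Ω → Ω} {f : Ω → ℝ} {C : ℝ} (hC : ∀ ω, |f ω| ≤ C)
    (n : ℕ) (ω : Ω) : |birkhoffSum T f n ω| ≤ n * C := by
  calc |birkhoffSum T f n ω| ≤ ∑ k ∈ Finset.range n, |f (T^[k] ω)| :=
        Finset.abs_sum_le_sum_abs _ _
    _ ≤ ∑ _k ∈ Finset.range n, C := Finset.sum_le_sum fun k _ => hC _
    _ = n * C := by simp [Finset.sum_const, mul_comm]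

/-- max of the partial Birkhoff sums `S_0 = 0, S_1, ..., S_N`. -/
private noncomputable def birkMax (T : Ω → Ω) (f : Ω → ℝ) : ℕ → Ω → ℝ
  | 0 => fun _ => 0
  | (N + 1) => fun ω => max (birkMax T f N ω) (birkhoffSum T f (N + 1) ω)

private lemma birkMax_nonneg (T : Ω → Ω) (f : Ω → ℝ) : ∀ N ω, 0 ≤ birkMax T f N ω := by
  intro N
  induction N with
  | zero => intro ω; exact le_refl 0
  | succ N ih => intro ω; exact le_trans (ih ω) (le_max_left _ _)

private lemma birkMax_mono (T : Ω → Ω) (f : Ω → ℝ) (ω : Ω) :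
    Monotone fun N => birkMax T f N ω :=
  monotone_nat_of_le_succ fun N => le_max_left _ _

private lemma birkhoffSum_le_birkMax (T : Ω → Ω) (f : Ω → ℝ) :
    ∀ N, ∀ n ≤ N, ∀ ω, birkhoffSum T f n ω ≤ birkMax T f N ω := by
  intro N
  induction N with
  | zero =>
    intro n hn ω
    interval_cases n
    simp [birkhoffSum_zero, birkMax]
  | succ N ih =>
    intro n hn ω
    rcases eq_or_lt_of_le hn with rfl | h
    · exact le_max_right _ _
    · exact le_trans (ih n (Nat.lt_succ_iff.mp h) ω) (le_max_left _ _)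

private lemma measurable_birkMax {T : Ω → Ω} (hT : Measurable T) {f : Ω → ℝ}
    (hf : Measurable f) (N : ℕ) : Measurable (birkMax T f N) := by
  induction N with
  | zero => exact measurable_const
  | succ N ih => exact ih.max (measurable_birkhoffSum hT hf (N + 1))

private lemma abs_birkMax_le {T : Ω → Ω} {f : Ω → ℝ} {C : ℝ} (hC0 : 0 ≤ C)
    (hC : ∀ ω, |f ω| ≤ C) (N : ℕ) (ω : Ω) : |birkMax T f N ω| ≤ N * C := by
  rw [abs_of_nonneg (birkMax_nonneg T f N ω)]
  induction N with
  | zero => simp [birkMax]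
  | succ N ih =>
    refine max_le (le_trans ih ?_) ?_
    · push_cast
      nlinarith
    · have := (abs_le.mp (abs_birkhoffSum_le (T := T) hC (N + 1) ω)).2
      push_cast at this ⊢
      linarith

private lemma birkMax_le_step (T : Ω → Ω) (f : Ω → ℝ) :
    ∀ N ω, birkMax T f N ω ≤ max 0 (f ω + birkMax T f N (T ω)) := by
  intro N
  induction N with
  | zero => intro ω; exact le_max_left _ _
  | succ N ih =>
    intro ω
    refine max_le ?_ ?_
    · refine le_trans (ih ω) (max_le_max le_rfl ?_)
      exact add_le_add_right (birkMax_mono T f (T ω) (Nat.le_succ N)) _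
    · refine le_trans ?_ (le_max_right 0 _)
      rw [birkhoffSum_succ' T f N ω]
      exact add_le_add_right (birkhoffSum_le_birkMax T f (N + 1) N (Nat.le_succ N) (T ω)) _

private lemma integrable_of_bdd {μ : Measure Ω} [IsProbabilityMeasure μ] {g : Ω → ℝ} {C : ℝ}
    (hg : Measurable g) (hC : ∀ ω, |g ω| ≤ C) : Integrable g μ :=
  ⟨hg.aestronglyMeasurable,
    HasFiniteIntegral.of_bounded (C := C) (ae_of_all _ fun ω => by
      rw [Real.norm_eq_abs]; exact hC ω)⟩

/-- Garsia's maximal ergodic lemma. -/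
private lemma maximal_ergodic (μ : Measure Ω) [IsProbabilityMeasure μ] {T : Ω → Ω}
    (hT : MeasurePreserving T μ μ) {f : Ω → ℝ} (hf : Measurable f) {C : ℝ} (hC0 : 0 ≤ C)
    (hC : ∀ ω, |f ω| ≤ C) (N : ℕ) :
    0 ≤ ∫ ω in {ω | 0 < birkMax T f N ω}, f ω ∂μ := by
  set M := birkMax T f N with hM
  have hMm : Measurable M := measurable_birkMax hT.measurable hf N
  have hMT : Measurable fun ω => M (T ω) := hMm.comp hT.measurable
  have intf : Integrable f μ := integrable_of_bdd hf hC
  have intM : Integrable M μ := integrable_of_bdd hMm (abs_birkMax_le hC0 hC N)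
  have intMT : Integrable (fun ω => M (T ω)) μ :=
    integrable_of_bdd hMT fun ω => abs_birkMax_le hC0 hC N (T ω)
  set E := {ω | 0 < M ω} with hEdef
  have hE : MeasurableSet E := measurableSet_lt measurable_const hMm
  have key : ∀ ω ∈ E, M ω - M (T ω) ≤ f ω := by
    intro ω hω
    have hstep := birkMax_le_step T f N ω
    rcases le_max_iff.mp hstep with h | h
    · exact absurd (lt_of_lt_of_le hω h) (lt_irrefl 0)
    · linarith
  have h1 : ∫ ω, M (T ω) ∂μ = ∫ ω, M ω ∂μ := by
    rw [← integral_map hT.measurable.aemeasurable hMm.aestronglyMeasurable, hT.map_eq]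
  have h2 : ∫ ω in E, M ω ∂μ = ∫ ω, M ω ∂μ := by
    have := integral_add_compl hE intM
    have hzero : ∫ ω in Eᶜ, M ω ∂μ = 0 := by
      refine setIntegral_eq_zero_of_forall_eq_zero fun ω hω => ?_
      have h1 : ¬ 0 < M ω := hω
      exact le_antisymm (not_lt.mp h1) (birkMax_nonneg T f N ω)
    linarith
  have h3 : ∫ ω in E, M (T ω) ∂μ ≤ ∫ ω, M (T ω) ∂μ :=
    setIntegral_le_integral intMT (ae_of_all _ fun ω => birkMax_nonneg T f N (T ω))
  have h4 : ∫ ω in E, (M ω - M (T ω)) ∂μ = ∫ ω in E, M ω ∂μ - ∫ ω in E, M (T ω) ∂μ :=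
    integral_sub intM.integrableOn intMT.integrableOn
  have h5 : ∫ ω in E, (M ω - M (T ω)) ∂μ ≤ ∫ ω in E, f ω ∂μ :=
    setIntegral_mono_on (intM.integrableOn.sub intMT.integrableOn) intf.integrableOn hE key
  linarith

/-- Birkhoff's pointwise ergodic theorem for bounded measurable functions. -/
private theorem birkhoff_bdd (μ : Measure Ω) [IsProbabilityMeasure μ] {T : Ω → Ω}
    (hT : Ergodic T μ) {f : Ω → ℝ} (hf : Measurable f) {C : ℝ} (hC0 : 0 ≤ C)
    (hC : ∀ ω, |f ω| ≤ C) :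
    ∀ᵐ ω ∂μ, Tendsto (fun n : ℕ => birkhoffSum T f n ω / n) atTop (nhds (∫ ω, f ω ∂μ)) := by
  have hTm : Measurable T := hT.toMeasurePreserving.measurable
  have intf : Integrable f μ := integrable_of_bdd hf hC
  have havg_bdd : ∀ ω n, |birkhoffSum T f n ω / (n : ℝ)| ≤ C := by
    intro ω n
    rcases Nat.eq_zero_or_pos n with rfl | hn
    · simpa using hC0
    · have hn' : (0 : ℝ) < n := by exact_mod_cast hn
      rw [abs_div, abs_of_pos hn', div_le_iff₀ hn']
      calc |birkhoffSum T f n ω| ≤ n * C := abs_birkhoffSum_le hC n ω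
        _ = C * n := mul_comm _ _
  -- invariance of limsup / liminf of the averages
  have hdiff : ∀ ω, Tendsto
      (fun n : ℕ => birkhoffSum T f n (T ω) / n - birkhoffSum T f n ω / n) atTop (nhds 0) := by
    intro ω
    have heq : ∀ n : ℕ, birkhoffSum T f n (T ω) / n - birkhoffSum T f n ω / n
        = (f (T^[n] ω) - f ω) / n := by
      intro n
      rw [div_sub_div_same, birkhoffSum_apply_sub_birkhoffSum]
    simp only [heq]
    refine squeeze_zero_norm ?_ (tendsto_const_div_atTop_nhds_zero_nat (2 * C))
    intro n
    rcases Nat.eq_zero_or_pos n with rfl | hn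
    · simp
    · have hn' : (0 : ℝ) < n := by exact_mod_cast hn
      rw [Real.norm_eq_abs, abs_div, abs_of_pos hn']
      have hnum : |f (T^[n] ω) - f ω| ≤ 2 * C := by
        have h1 := abs_le.mp (hC (T^[n] ω))
        have h2 := abs_le.mp (hC ω)
        rw [abs_le]; constructor <;> linarith [h1.1, h1.2, h2.1, h2.2]
      gcongr
  set φ : Ω → ℝ := fun ω => limsup (fun n : ℕ => birkhoffSum T f n ω / n) atTop with hφdef
  set ψ : Ω → ℝ := fun ω => liminf (fun n : ℕ => birkhoffSum T f n ω / n) atTop with hψdef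
  have hφT : ∀ ω, φ (T ω) = φ ω := fun ω =>
    limsup_eq_of_tendsto_sub (havg_bdd ω) (havg_bdd (T ω)) (hdiff ω)
  have hψT : ∀ ω, ψ (T ω) = ψ ω := fun ω =>
    liminf_eq_of_tendsto_sub (havg_bdd ω) (havg_bdd (T ω)) (hdiff ω)
  have hφm : Measurable φ :=
    Measurable.limsup fun n => (measurable_birkhoffSum hTm hf n).div_const _
  have hψm : Measurable ψ :=
    Measurable.liminf fun n => (measurable_birkhoffSum hTm hf n).div_const _
  obtain ⟨c, hc⟩ := hT.quasiErgodic.ae_eq_const_of_ae_eq_comp_ae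
    hφm.aestronglyMeasurable (ae_of_all _ hφT)
  obtain ⟨c', hc'⟩ := hT.quasiErgodic.ae_eq_const_of_ae_eq_comp_ae
    hψm.aestronglyMeasurable (ae_of_all _ hψT)
  have hne : (ae μ).NeBot := ae_neBot.mpr (IsProbabilityMeasure.ne_zero μ)
  -- c' ≤ c
  have hcc' : c' ≤ c := by
    obtain ⟨ω, hω1, hω2⟩ := (hc.and hc').exists
    calc c' = ψ ω := hω2.symm
      _ ≤ φ ω := liminf_le_limsup (bdd_above_of_abs (havg_bdd ω)) (bdd_below_of_abs (havg_bdd ω))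
      _ = c := hω1
  -- main estimate via the maximal ergodic lemma
  have main : ∀ (g : Ω → ℝ), Measurable g → ∀ D : ℝ, 0 ≤ D → (∀ ω, |g ω| ≤ D) →
      (∀ᵐ ω ∂μ, ∃ n, 1 ≤ n ∧ 0 < birkhoffSum T g n ω) → 0 ≤ ∫ ω, g ω ∂μ := by
    intro g hg D hD0 hD hae
    have intg : Integrable g μ := integrable_of_bdd hg hD
    set E : ℕ → Set Ω := fun N => {ω | 0 < birkMax T g N ω} with hEdef
    have hEm : ∀ N, MeasurableSet (E N) := fun N =>
      measurableSet_lt measurable_const (measurable_birkMax hTm hg N)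
    have hEmono : Monotone E := fun N M hNM ω hω =>
      lt_of_lt_of_le hω (birkMax_mono T g ω hNM)
    have hfull : ∀ᵐ ω ∂μ, ω ∈ ⋃ N, E N := by
      filter_upwards [hae] with ω hω
      obtain ⟨n, hn1, hn2⟩ := hω
      exact mem_iUnion.mpr ⟨n, lt_of_lt_of_le hn2 (birkhoffSum_le_birkMax T g n n le_rfl ω)⟩
    have hrestr : μ.restrict (⋃ N, E N) = μ := by
      have : (⋃ N, E N) =ᵐ[μ] (univ : Set Ω) := by
        have heq : (⋃ N, E N)ᶜ = {a | ∀ N, a ∉ E N} := by ext a; simp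
        rw [ae_eq_univ, heq]
        simpa [ae_iff] using hfull
      rw [Measure.restrict_congr_set this, Measure.restrict_univ]
    have htend := tendsto_setIntegral_of_monotone hEm hEmono intg.integrableOn
    have hlim : (∫ ω in ⋃ N, E N, g ω ∂μ) = ∫ ω, g ω ∂μ := by rw [hrestr]
    have := ge_of_tendsto' htend (fun N => maximal_ergodic μ hT.toMeasurePreserving hg hD0 hD N)
    linarith [hlim ▸ this]
  have hSconst : ∀ (t : ℝ) (n : ℕ) (ω : Ω),
      birkhoffSum T (fun ω' => f ω' - t) n ω = birkhoffSum T f n ω - n * t := by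
    intro t n ω
    simp [birkhoffSum, Finset.sum_sub_distrib, Finset.sum_const, mul_comm]
  have hSconst' : ∀ (t : ℝ) (n : ℕ) (ω : Ω),
      birkhoffSum T (fun ω' => t - f ω') n ω = n * t - birkhoffSum T f n ω := by
    intro t n ω
    simp [birkhoffSum, Finset.sum_sub_distrib, Finset.sum_const, mul_comm]
  -- c ≤ ∫ f
  have hA : c ≤ ∫ ω, f ω ∂μ := by
    refine le_of_forall_pos_le_add fun ε hε => ?_
    by_contra hlt
    push_neg at hlt
    set t : ℝ := (∫ ω, f ω ∂μ) + ε with ht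
    have htc : t < c := hlt
    set g : Ω → ℝ := fun ω => f ω - t with hg
    have hgm : Measurable g := hf.sub measurable_const
    have hgb : ∀ ω, |g ω| ≤ C + |t| := by
      intro ω
      have := abs_le.mp (hC ω)
      rw [abs_le]
      constructor <;> cases abs_cases t <;> simp [hg] <;> linarith [this.1, this.2]
    have hae : ∀ᵐ ω ∂μ, ∃ n, 1 ≤ n ∧ 0 < birkhoffSum T g n ω := by
      filter_upwards [hc] with ω hω
      have hfc : t < φ ω := by rw [hω]; exact htc
      have hfreq : ∃ᶠ n in atTop, t < birkhoffSum T f n ω / n :=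
        frequently_lt_of_lt_limsup (bdd_below_of_abs (havg_bdd ω)).isCoboundedUnder_le hfc
      obtain ⟨n, hn1, hn2⟩ := (frequently_atTop.mp hfreq) 1
      refine ⟨n, hn1, ?_⟩
      have hn' : (0 : ℝ) < n := by exact_mod_cast hn1
      rw [hSconst t n ω]
      have := (lt_div_iff₀ hn').mp hn2
      nlinarith
    have h0 := main g hgm (C + |t|) (by positivity) hgb hae
    have : ∫ ω, g ω ∂μ = (∫ ω, f ω ∂μ) - t := by
      rw [hg, integral_sub intf (integrable_const t), integral_const]
      simp [measure_univ]
    rw [this] at h0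
    simp only [ht] at h0
    linarith
  -- ∫ f ≤ c'
  have hB : (∫ ω, f ω ∂μ) ≤ c' := by
    refine le_of_forall_pos_le_add fun ε hε => ?_
    by_contra hlt
    push_neg at hlt
    set t : ℝ := (∫ ω, f ω ∂μ) - ε with ht
    have htc : c' < t := by simp only [ht]; linarith
    set g : Ω → ℝ := fun ω => t - f ω with hg
    have hgm : Measurable g := measurable_const.sub hf
    have hgb : ∀ ω, |g ω| ≤ C + |t| := by
      intro ω
      have := abs_le.mp (hC ω)
      rw [abs_le]
      constructor <;> cases abs_cases t <;> simp [hg] <;> linarith [this.1, this.2]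
    have hae : ∀ᵐ ω ∂μ, ∃ n, 1 ≤ n ∧ 0 < birkhoffSum T g n ω := by
      filter_upwards [hc'] with ω hω
      have hfc : ψ ω < t := by rw [hω]; exact htc
      have hfreq : ∃ᶠ n in atTop, birkhoffSum T f n ω / n < t :=
        frequently_lt_of_liminf_lt (bdd_above_of_abs (havg_bdd ω)).isCoboundedUnder_ge hfc
      obtain ⟨n, hn1, hn2⟩ := (frequently_atTop.mp hfreq) 1
      refine ⟨n, hn1, ?_⟩
      have hn' : (0 : ℝ) < n := by exact_mod_cast hn1
      rw [hSconst' t n ω]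
      have := (div_lt_iff₀ hn').mp hn2
      nlinarith
    have h0 := main g hgm (C + |t|) (by positivity) hgb hae
    have : ∫ ω, g ω ∂μ = t - ∫ ω, f ω ∂μ := by
      rw [hg, integral_sub (integrable_const t) intf, integral_const]
      simp [measure_univ]
    rw [this] at h0
    simp only [ht] at h0
    linarith
  have hceq : c = ∫ ω, f ω ∂μ := le_antisymm hA (le_trans hB hcc')
  have hc'eq : c' = ∫ ω, f ω ∂μ := le_antisymm (le_trans hcc' hA) hB
  filter_upwards [hc, hc'] with ω hω hω'
  refine tendsto_of_le_liminf_of_limsup_le ?_ ?_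
    (bdd_above_of_abs (havg_bdd ω)) (bdd_below_of_abs (havg_bdd ω))
  · have h1 : ψ ω = c' := hω'
    rw [← hc'eq, ← h1]
  · have h1 : φ ω = c := hω
    rw [← hceq, ← h1]

end Birkhoff

/-- If `T` is ergodic and measure preserving and `X : Ω → ℝ` is
measurable with cdf `F`, and `I_d ω = #{1 ≤ r ≤ d-1 : X(T^r ω) ≤ X ω}`, then for
`μ`-a.e. `ω` the limit `lim_{d→∞} I_d(ω)/d` exists and equals `F(X ω)`. -/
theorem stmt4 {Ω : Type*} [MeasurableSpace Ω] (μ : Measure Ω) [IsProbabilityMeasure μ]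
    (T : Ω → Ω) (hT : Ergodic T μ)
    (X : Ω → ℝ) (hX : Measurable X)
    (F : ℝ → ℝ) (hF : ∀ q, F q = (μ {ω | X ω ≤ q}).toReal)
    (I : ℕ → Ω → ℕ)
    (hI : ∀ d ω, I d ω = ((Finset.Ico 1 d).filter (fun r => X (T^[r] ω) ≤ X ω)).card) :
    ∀ᵐ ω ∂μ, Tendsto (fun d : ℕ => (I d ω : ℝ) / d) atTop (nhds (F (X ω))) := by
  classical
  have hTm : Measurable T := hT.toMeasurePreserving.measurable
  set fq : ℝ → Ω → ℝ := fun q => Set.indicator {ω | X ω ≤ q} 1 with hfqdef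
  have hset : ∀ q, MeasurableSet {ω | X ω ≤ q} := fun q => measurableSet_le hX measurable_const
  have hfq_meas : ∀ q, Measurable (fq q) := fun q => measurable_one.indicator (hset q)
  have hfq_bdd : ∀ q ω, |fq q ω| ≤ 1 := by
    intro q ω
    by_cases h : X ω ≤ q <;> simp [hfqdef, Set.indicator_apply, h]
  have hint : ∀ q, (∫ ω, fq q ω ∂μ) = F q := by
    intro q
    rw [hF q, hfqdef]
    exact integral_indicator_one (hset q)
  have hcount : ∀ (q : ℝ) (n : ℕ) (ω : Ω), birkhoffSum T (fq q) n ω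
      = (((Finset.range n).filter fun k => X (T^[k] ω) ≤ q).card : ℝ) := by
    intro q n ω
    rw [← Finset.sum_boole]
    simp only [birkhoffSum]
    refine Finset.sum_congr rfl fun k _ => ?_
    by_cases h : X (T^[k] ω) ≤ q <;> simp [hfqdef, Set.indicator_apply, h]
  have havgb : ∀ (q : ℝ) (d : ℕ) (ω : Ω), |birkhoffSum T (fq q) d ω / (d : ℝ)| ≤ 1 := by
    intro q d ω
    rcases Nat.eq_zero_or_pos d with rfl | hd
    · simp
    · have hd' : (0 : ℝ) < d := by exact_mod_cast hd
      rw [abs_div, abs_of_pos hd', div_le_one hd']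
      simpa using abs_birkhoffSum_le (T := T) (hfq_bdd q) d ω
  set D : Set ℝ := (Set.range ((↑) : ℚ → ℝ)) ∪ {a | μ {ω | X ω = a} ≠ 0} with hDdef
  have hDc : D.Countable := by
    refine (Set.countable_range _).union ?_
    have h := MeasureTheory.Measure.countable_meas_level_set_pos (μ := μ) hX
    refine h.mono fun a ha => ?_
    simpa [pos_iff_ne_zero] using ha
  have hgood : ∀ᵐ ω ∂μ, ∀ q ∈ D,
      Tendsto (fun n : ℕ => birkhoffSum T (fq q) n ω / n) atTop (nhds (F q)) := by
    rw [ae_ball_iff hDc]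
    intro q _
    have := birkhoff_bdd μ hT (hfq_meas q) zero_le_one (hfq_bdd q)
    rwa [hint q] at this
  have hrc : ∀ x : ℝ, ∀ ε > (0:ℝ), ∃ q : ℚ, x < (q : ℝ) ∧ F (q : ℝ) ≤ F x + ε := by
    intro x ε hε
    set s : ℕ → Set Ω := fun n => {ω | X ω ≤ x + 1 / ((n : ℝ) + 1)} with hsdef
    have hanti : Antitone s := by
      intro n m hnm ω hω
      simp only [hsdef, mem_setOf_eq] at hω ⊢
      have h1 : (1 : ℝ) / ((m : ℝ) + 1) ≤ 1 / ((n : ℝ) + 1) := by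
        apply one_div_le_one_div_of_le (by positivity)
        have : (n : ℝ) ≤ m := by exact_mod_cast hnm
        linarith
      linarith
    have hiInter : (⋂ n, s n) = {ω | X ω ≤ x} := by
      ext ω
      simp only [mem_iInter, mem_setOf_eq, hsdef]
      constructor
      · intro h
        by_contra hlt
        push_neg at hlt
        obtain ⟨n, hn⟩ := exists_nat_one_div_lt (sub_pos.mpr hlt)
        have := h n
        linarith
      · intro h n
        have h2 : (0 : ℝ) < 1 / ((n : ℝ) + 1) := by positivity
        linarith
    have ht := tendsto_measure_iInter_atTop (μ := μ)
      (fun n => (hset _).nullMeasurableSet) hanti ⟨0, measure_ne_top μ _⟩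
    rw [hiInter] at ht
    have htr : Tendsto (fun n => (μ (s n)).toReal) atTop (nhds (F x)) := by
      rw [hF x]
      exact (ENNReal.tendsto_toReal (measure_ne_top μ _)).comp ht
    obtain ⟨n, hn⟩ := (htr.eventually_lt_const (lt_add_of_pos_right (F x) hε)).exists
    obtain ⟨q, hq1, hq2⟩ := exists_rat_btwn
      (show x < x + 1 / ((n : ℝ) + 1) from lt_add_of_pos_right x (by positivity))
    refine ⟨q, hq1, ?_⟩
    have hle : F (q : ℝ) ≤ (μ (s n)).toReal := by
      rw [hF]
      exact ENNReal.toReal_mono (measure_ne_top μ _)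
        (measure_mono fun ω h => le_trans h (le_of_lt hq2))
    linarith
  have hlc : ∀ x : ℝ, μ {ω | X ω = x} = 0 → ∀ ε > (0:ℝ),
      ∃ q : ℚ, (q : ℝ) < x ∧ F x - ε ≤ F (q : ℝ) := by
    intro x hatom ε hε
    set s : ℕ → Set Ω := fun n => {ω | X ω ≤ x - 1 / ((n : ℝ) + 1)} with hsdef
    have hmonos : Monotone s := by
      intro n m hnm ω hω
      simp only [hsdef, mem_setOf_eq] at hω ⊢
      have h1 : (1 : ℝ) / ((m : ℝ) + 1) ≤ 1 / ((n : ℝ) + 1) := by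
        apply one_div_le_one_div_of_le (by positivity)
        have : (n : ℝ) ≤ m := by exact_mod_cast hnm
        linarith
      linarith
    have hiUnion : (⋃ n, s n) = {ω | X ω < x} := by
      ext ω
      simp only [mem_iUnion, mem_setOf_eq, hsdef]
      constructor
      · rintro ⟨n, hn⟩
        have h2 : (0 : ℝ) < 1 / ((n : ℝ) + 1) := by positivity
        linarith
      · intro h
        obtain ⟨n, hn⟩ := exists_nat_one_div_lt (sub_pos.mpr h)
        exact ⟨n, by linarith⟩
    have hlt : μ {ω | X ω < x} = μ {ω | X ω ≤ x} := by
      refine le_antisymm (measure_mono fun ω (h : X ω < x) => (le_of_lt h : X ω ≤ x)) ?_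
      calc μ {ω | X ω ≤ x} ≤ μ ({ω | X ω < x} ∪ {ω | X ω = x}) :=
            measure_mono fun ω (h : X ω ≤ x) => by
              rcases lt_or_eq_of_le h with h' | h'
              exacts [Or.inl h', Or.inr h']
        _ ≤ μ {ω | X ω < x} + μ {ω | X ω = x} := measure_union_le _ _
        _ = μ {ω | X ω < x} := by rw [hatom, add_zero]
    have ht := tendsto_measure_iUnion_atTop (μ := μ) hmonos
    rw [hiUnion] at ht
    have htr : Tendsto (fun n => (μ (s n)).toReal) atTop (nhds (F x)) := by
      rw [hF x, ← hlt]
      exact (ENNReal.tendsto_toReal (measure_ne_top μ _)).comp ht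
    obtain ⟨n, hn⟩ := (htr.eventually_const_lt (show F x - ε < F x by linarith)).exists
    obtain ⟨q, hq1, hq2⟩ := exists_rat_btwn
      (show x - 1 / ((n : ℝ) + 1) < x from sub_lt_self x (by positivity))
    refine ⟨q, hq2, ?_⟩
    have hle : (μ (s n)).toReal ≤ F (q : ℝ) := by
      rw [hF]
      exact ENNReal.toReal_mono (measure_ne_top μ _)
        (measure_mono fun ω h => le_trans h (le_of_lt hq1))
    linarith
  filter_upwards [hgood] with ω hω
  set x := X ω with hxdef
  set u : ℕ → ℝ := fun d => (I d ω : ℝ) / d with hudef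
  have hu0 : ∀ d, 0 ≤ u d := fun d => div_nonneg (Nat.cast_nonneg _) (Nat.cast_nonneg _)
  have hu1 : ∀ d, u d ≤ 1 := by
    intro d
    rcases Nat.eq_zero_or_pos d with rfl | hd
    · simp [hudef]
    · have hd' : (0 : ℝ) < d := by exact_mod_cast hd
      rw [hudef]
      dsimp only
      rw [div_le_one hd']
      have : I d ω ≤ d := by
        rw [hI]
        calc ((Finset.Ico 1 d).filter fun r => X (T^[r] ω) ≤ X ω).card
            ≤ (Finset.Ico 1 d).card := Finset.card_filter_le _ _
          _ = d - 1 := Nat.card_Ico 1 d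
          _ ≤ d := Nat.sub_le d 1
      exact_mod_cast this
  have hbdd_le : IsBoundedUnder (· ≤ ·) atTop u := isBoundedUnder_of ⟨1, hu1⟩
  have hbdd_ge : IsBoundedUnder (· ≥ ·) atTop u := isBoundedUnder_of ⟨0, hu0⟩
  have hinv : ∀ d : ℕ, 1 / (d : ℝ) ≤ 1 := by
    intro d
    rcases Nat.eq_zero_or_pos d with rfl | hd
    · simp
    · rw [div_le_one (by exact_mod_cast hd)]
      exact_mod_cast hd
  have hupper : ∀ q ∈ D, x ≤ q → limsup u atTop ≤ F q := by
    intro q hqD hxq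
    have htq := hω q hqD
    have hev : ∀ᶠ d in atTop, u d ≤ birkhoffSum T (fq q) d ω / d := by
      refine eventually_atTop.mpr ⟨1, fun d hd => ?_⟩
      have hcard : I d ω ≤ ((Finset.range d).filter fun k => X (T^[k] ω) ≤ q).card := by
        rw [hI]
        apply Finset.card_le_card
        intro r hr
        rw [Finset.mem_filter, Finset.mem_Ico] at hr
        rw [Finset.mem_filter, Finset.mem_range]
        exact ⟨hr.1.2, le_trans hr.2 hxq⟩
      have hcard' : (I d ω : ℝ)
          ≤ (((Finset.range d).filter fun k => X (T^[k] ω) ≤ q).card : ℝ) := by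
        exact_mod_cast hcard
      show (I d ω : ℝ) / d ≤ birkhoffSum T (fq q) d ω / d
      rw [hcount q d ω]
      gcongr
    calc limsup u atTop ≤ limsup (fun d : ℕ => birkhoffSum T (fq q) d ω / d) atTop :=
          limsup_le_limsup hev hbdd_ge.isCoboundedUnder_le
            (isBoundedUnder_of ⟨1, fun d => (abs_le.mp (havgb q d ω)).2⟩)
      _ = F q := htq.limsup_eq
  have hlower : ∀ q ∈ D, q ≤ x → F q ≤ liminf u atTop := by
    intro q hqD hqx
    have htq := hω q hqD
    have htq2 : Tendsto (fun d : ℕ => birkhoffSum T (fq q) d ω / d - 1 / d) atTop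
        (nhds (F q)) := by
      have := htq.sub tendsto_one_div_atTop_nhds_zero_nat
      simpa using this
    have hev : ∀ᶠ d in atTop, birkhoffSum T (fq q) d ω / d - 1 / d ≤ u d := by
      refine eventually_atTop.mpr ⟨1, fun d hd => ?_⟩
      have hcard : (((Finset.range d).filter fun k => X (T^[k] ω) ≤ q).card : ℝ)
          ≤ (I d ω : ℝ) + 1 := by
        have hn : ((Finset.range d).filter fun k => X (T^[k] ω) ≤ q).card ≤ I d ω + 1 := by
          rw [hI]
          calc ((Finset.range d).filter fun k => X (T^[k] ω) ≤ q).card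
              ≤ (insert 0 ((Finset.Ico 1 d).filter fun r => X (T^[r] ω) ≤ X ω)).card := by
                apply Finset.card_le_card
                intro k hk
                rw [Finset.mem_filter, Finset.mem_range] at hk
                rcases Nat.eq_zero_or_pos k with rfl | hk1
                · exact Finset.mem_insert_self _ _
                · exact Finset.mem_insert_of_mem (Finset.mem_filter.mpr
                    ⟨Finset.mem_Ico.mpr ⟨hk1, hk.1⟩, le_trans hk.2 hqx⟩)
            _ ≤ _ + 1 := Finset.card_insert_le _ _
        exact_mod_cast hn
      show birkhoffSum T (fq q) d ω / d - 1 / d ≤ (I d ω : ℝ) / d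
      rw [hcount q d ω, div_sub_div_same]
      gcongr
      linarith
    calc F q = liminf (fun d : ℕ => birkhoffSum T (fq q) d ω / d - 1 / d) atTop :=
          htq2.liminf_eq.symm
      _ ≤ liminf u atTop := liminf_le_liminf hev
            (isBoundedUnder_of ⟨-2, fun d => by
              have h1 := (abs_le.mp (havgb q d ω)).1
              have h2 := hinv d
              linarith⟩)
            hbdd_le.isCoboundedUnder_ge
  have hupperx : limsup u atTop ≤ F x := by
    refine le_of_forall_pos_le_add fun ε hε => ?_
    obtain ⟨q, hq1, hq2⟩ := hrc x ε hε
    have := hupper (q : ℝ) (Set.mem_union_left _ ⟨q, rfl⟩) (le_of_lt hq1)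
    linarith
  have hlowerx : F x ≤ liminf u atTop := by
    by_cases hatom : μ {ω' | X ω' = x} = 0
    · refine le_of_forall_pos_le_add fun ε hε => ?_
      obtain ⟨q, hq1, hq2⟩ := hlc x hatom ε hε
      have := hlower (q : ℝ) (Set.mem_union_left _ ⟨q, rfl⟩) (le_of_lt hq1)
      linarith
    · exact hlower x (Set.mem_union_right _ hatom) le_rfl
  exact tendsto_of_le_liminf_of_limsup_le hlowerx hupperx hbdd_le hbdd_ge
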